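/- Let 1 < q < p < r, A > 0, B > 0, and M(t) = t^{p-q} A - t^{r-q} B for t > 0. If 0 < C < M(t_max), where t_max = ((p-q)A/((r-q)B))^{1/(r-p)}, then the equation M(t) = C has exactly two positive solutions t₀ < t_max < t₁, and moreover M'(t₀) > 0 and M'(t₁) < 0. -/

import Mathlib

open Real

theorem stmt_3 (p q r A B C : ℝ) (hq : 1 < q) (hqp : q < p) (hpr : p < r)
    (hA : 0 < A) (hB : 0 < B) :
    let M : ℝ → ℝ := fun t => t ^ (p - q) * A - t ^ (r - q) * B
    let tmax : ℝ := ((p - q) * A / ((r - q) * B)) ^ (1 / (r - p))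
    0 < C → C < M tmax →
    ∃ t₀ t₁ : ℝ, 0 < t₀ ∧ t₀ < tmax ∧ tmax < t₁ ∧
      M t₀ = C ∧ M t₁ = C ∧
      (∀ t : ℝ, 0 < t → M t = C → t = t₀ ∨ t = t₁) ∧
      0 < deriv M t₀ ∧ deriv M t₁ < 0 := by
  intro M tmax hC hCM
  set K : ℝ := (p - q) * A / ((r - q) * B) with hKdef
  have hpq : (0:ℝ) < p - q := by linarith
  have hrq : (0:ℝ) < r - q := by linarith
  have hrp : (0:ℝ) < r - p := by linarith
  have hK : 0 < K := div_pos (mul_pos hpq hA) (mul_pos hrq hB)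
  have htm : 0 < tmax := Real.rpow_pos_of_pos hK _
  have hTmK : tmax ^ (r - p) = K := by
    show (K ^ (1 / (r - p))) ^ (r - p) = K
    rw [← Real.rpow_mul hK.le, one_div, inv_mul_cancel₀ hrp.ne', Real.rpow_one]
  -- continuity of M
  have hMcont : Continuous M := by
    rw [continuous_iff_continuousAt]
    intro x
    exact ((Real.continuousAt_rpow_const x (p - q) (Or.inr hpq.le)).mul continuousAt_const).sub
      ((Real.continuousAt_rpow_const x (r - q) (Or.inr hrq.le)).mul continuousAt_const)
  -- derivative
  have hderiv : ∀ t : ℝ, 0 < t →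
      HasDerivAt M (t ^ (p - q - 1) * ((p - q) * A - (r - q) * B * t ^ (r - p))) t := by
    intro t ht
    have h1 := (Real.hasDerivAt_rpow_const (x := t) (p := p - q) (Or.inl ht.ne')).mul_const A
    have h2 := (Real.hasDerivAt_rpow_const (x := t) (p := r - q) (Or.inl ht.ne')).mul_const B
    have h := h1.sub h2
    convert h using 1
    case e'_4 => rfl
    case e'_5 => rfl
    case e'_8 => rfl
    have hsplit : t ^ (r - q - 1) = t ^ (p - q - 1) * t ^ (r - p) := by
      rw [← Real.rpow_add ht]; ring_nf
    rw [hsplit]; ring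
  have hfac : ∀ t : ℝ, 0 < t →
      deriv M t = t ^ (p - q - 1) * ((p - q) * A - (r - q) * B * t ^ (r - p)) := fun t ht =>
    (hderiv t ht).deriv
  have hDpos : ∀ t : ℝ, 0 < t → t < tmax → 0 < deriv M t := by
    intro t ht htlt
    rw [hfac t ht]
    have h1 : t ^ (r - p) < K := by
      rw [← hTmK]; exact Real.rpow_lt_rpow ht.le htlt hrp
    have h2 : (r - q) * B * t ^ (r - p) < (p - q) * A := by
      rw [hKdef, lt_div_iff₀ (mul_pos hrq hB)] at h1
      nlinarith
    exact mul_pos (Real.rpow_pos_of_pos ht _) (by linarith)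
  have hDneg : ∀ t : ℝ, tmax < t → deriv M t < 0 := by
    intro t htlt
    have ht : 0 < t := htm.trans htlt
    rw [hfac t ht]
    have h1 : K < t ^ (r - p) := by
      rw [← hTmK]; exact Real.rpow_lt_rpow htm.le htlt hrp
    have h2 : (p - q) * A < (r - q) * B * t ^ (r - p) := by
      rw [hKdef, div_lt_iff₀ (mul_pos hrq hB)] at h1
      nlinarith
    have := Real.rpow_pos_of_pos ht (p - q - 1)
    nlinarith
  -- strict monotonicity on [0, tmax]
  have hmono : StrictMonoOn M (Set.Icc 0 tmax) := by
    apply strictMonoOn_of_deriv_pos (convex_Icc 0 tmax) hMcont.continuousOn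
    intro t ht
    rw [interior_Icc] at ht
    exact hDpos t ht.1 ht.2
  -- strict antitonicity on [tmax, ∞)
  have hanti : StrictAntiOn M (Set.Ici tmax) := by
    apply strictAntiOn_of_deriv_neg (convex_Ici tmax) hMcont.continuousOn
    intro t ht
    rw [interior_Ici] at ht
    exact hDneg t ht
  -- M 0 = 0
  have hM0 : M 0 = 0 := by
    show (0:ℝ) ^ (p - q) * A - (0:ℝ) ^ (r - q) * B = 0
    rw [Real.zero_rpow hpq.ne', Real.zero_rpow hrq.ne']; ring
  -- existence of t₀
  obtain ⟨t₀, ht₀mem, hMt₀⟩ : ∃ t₀ ∈ Set.Ioo (0:ℝ) tmax, M t₀ = C := by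
    have := intermediate_value_Ioo (a := (0:ℝ)) (b := tmax) htm.le hMcont.continuousOn
    have hmem : C ∈ Set.Ioo (M 0) (M tmax) := by rw [hM0]; exact ⟨hC, hCM⟩
    obtain ⟨t₀, ht₀, h⟩ := this hmem
    exact ⟨t₀, ht₀, h⟩
  -- find T with M T ≤ 0
  set T : ℝ := max (tmax + 1) ((A / B) ^ (1 / (r - p))) with hTdef
  have hTgt : tmax < T := lt_of_lt_of_le (by linarith) (le_max_left _ _)
  have hTpos : 0 < T := htm.trans hTgt
  have hMT : M T ≤ 0 := by
    have hAB : 0 < A / B := div_pos hA hB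
    have h1 : (A / B) ^ (1 / (r - p)) ≤ T := le_max_right _ _
    have h2 : A / B ≤ T ^ (r - p) := by
      calc A / B = ((A / B) ^ (1 / (r - p))) ^ (r - p) := by
            rw [← Real.rpow_mul hAB.le, one_div, inv_mul_cancel₀ hrp.ne', Real.rpow_one]
        _ ≤ T ^ (r - p) :=
            Real.rpow_le_rpow (Real.rpow_pos_of_pos hAB _).le h1 hrp.le
    have h3 : A ≤ T ^ (r - p) * B := by
      rwa [div_le_iff₀ hB] at h2
    have hsplit : T ^ (r - q) = T ^ (p - q) * T ^ (r - p) := by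
      rw [← Real.rpow_add hTpos]; ring_nf
    show T ^ (p - q) * A - T ^ (r - q) * B ≤ 0
    rw [hsplit]
    have := Real.rpow_pos_of_pos hTpos (p - q)
    nlinarith
  -- existence of t₁
  obtain ⟨t₁, ht₁mem, hMt₁⟩ : ∃ t₁ ∈ Set.Ioo tmax T, M t₁ = C := by
    have := intermediate_value_Ioo' (a := tmax) (b := T) hTgt.le hMcont.continuousOn
    have hmem : C ∈ Set.Ioo (M T) (M tmax) := ⟨lt_of_le_of_lt hMT hC, hCM⟩
    obtain ⟨t₁, ht₁, h⟩ := this hmem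
    exact ⟨t₁, ht₁, h⟩
  refine ⟨t₀, t₁, ht₀mem.1, ht₀mem.2, ht₁mem.1, hMt₀, hMt₁, ?_, ?_, ?_⟩
  · intro t ht hMt
    rcases lt_trichotomy t tmax with h | h | h
    · left
      exact hmono.injOn ⟨ht.le, h.le⟩ ⟨ht₀mem.1.le, ht₀mem.2.le⟩ (by rw [hMt, hMt₀])
    · exfalso; rw [h] at hMt; rw [hMt] at hCM; exact lt_irrefl C hCM
    · right
      exact hanti.injOn (Set.mem_Ici.mpr h.le) (Set.mem_Ici.mpr ht₁mem.1.le)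
        (by rw [hMt, hMt₁])
  · exact hDpos t₀ ht₀mem.1 ht₀mem.2
  · exact hDneg t₁ ht₁mem.1
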